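/- Let f : ℝ → ℝ be continuous with f(y) ≥ 0 for all y, let γ, σ, v > 0, and let m ∈ ℝ satisfy m + (v/σ)(1 − log(v/σ)) ≥ 0. Define V_m(x,y,z) := γx − σ·log x + γz·y − γz·(v/σ)·log y + mγz for x, y > 0. Then along any differentiable solution (x, y, z) : [0,∞) → ℝ³ of ẋ = vz − γzxy, ẏ = γxy − σy, ż = −f(y)z² with x(t), y(t), z(t) > 0 for all t ≥ 0, one has d/dt [V_m(x(t), y(t), z(t))] = −(γ²vz/(σx))·(x − σ/γ)² − γ·f(y)·(y − (v/σ)·log y + m)·z² ≤ 0; i.e., V_m is a Lyapunov function for the system on the open first octant. -/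

import Mathlib

/-- Lyapunov function for the z-form of the plant growth model: with
`V_m(x,y,z) = γx − σ log x + γz y − γz (v/σ) log y + mγz` and
`m + (v/σ)(1 − log(v/σ)) ≥ 0`, along any positive solution of
`ẋ = vz − γzxy`, `ẏ = γxy − σy`, `ż = −f(y)z²` one has
`d/dt V_m = −(γ²vz/(σx))(x − σ/γ)² − γ f(y)(y − (v/σ) log y + m) z² ≤ 0`. -/
theorem plant_growth_lyapunov_derivative
    (γ σ v m : ℝ) (hγ : 0 < γ) (hσ : 0 < σ) (hv : 0 < v)
    (hm : 0 ≤ m + v / σ * (1 - Real.log (v / σ)))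
    (f : ℝ → ℝ) (hf : Continuous f) (hfnn : ∀ y, 0 ≤ f y)
    (x y z : ℝ → ℝ)
    (hx : ∀ t, 0 ≤ t → HasDerivAt x (v * z t - γ * z t * x t * y t) t)
    (hy : ∀ t, 0 ≤ t → HasDerivAt y (γ * x t * y t - σ * y t) t)
    (hz : ∀ t, 0 ≤ t → HasDerivAt z (-f (y t) * (z t) ^ 2) t)
    (hxpos : ∀ t, 0 ≤ t → 0 < x t) (hypos : ∀ t, 0 ≤ t → 0 < y t)
    (hzpos : ∀ t, 0 ≤ t → 0 < z t) :
    ∀ t, 0 ≤ t →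
      HasDerivAt
        (fun s => γ * x s - σ * Real.log (x s) + γ * z s * y s -
          γ * z s * (v / σ) * Real.log (y s) + m * γ * z s)
        (-(γ ^ 2 * v * z t / (σ * x t)) * (x t - σ / γ) ^ 2 -
          γ * f (y t) * (y t - v / σ * Real.log (y t) + m) * (z t) ^ 2) t ∧
      -(γ ^ 2 * v * z t / (σ * x t)) * (x t - σ / γ) ^ 2 -
          γ * f (y t) * (y t - v / σ * Real.log (y t) + m) * (z t) ^ 2 ≤ 0 := by
  intro t ht
  have hX := hx t ht
  have hY := hy t ht
  have hZ := hz t ht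
  have hxp := hxpos t ht
  have hyp := hypos t ht
  have hzp := hzpos t ht
  have hlx := hX.log hxp.ne'
  have hly := hY.log hyp.ne'
  constructor
  · have hD := ((((hX.const_mul γ).sub (hlx.const_mul σ)).add
      ((hZ.const_mul γ).mul hY)).sub
      (((hZ.const_mul γ).mul_const (v / σ)).mul hly)).add (hZ.const_mul (m * γ))
    refine hD.congr_deriv ?_
    field_simp
    ring
  · have hc : 0 < v / σ := div_pos hv hσ
    have hlog : v / σ * Real.log (y t / (v / σ)) ≤ v / σ * (y t / (v / σ) - 1) :=
      mul_le_mul_of_nonneg_left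
        (Real.log_le_sub_one_of_pos (div_pos hyp hc)) hc.le
    have key : 0 ≤ y t - v / σ * Real.log (y t) + m := by
      have hld := Real.log_div hyp.ne' hc.ne'
      have h3 : v / σ * (y t / (v / σ) - 1) = y t - v / σ := by field_simp
      have h4 : v / σ * Real.log (y t / (v / σ))
          = v / σ * Real.log (y t) - v / σ * Real.log (v / σ) := by
        rw [hld]; ring
      nlinarith [hlog, hm]
    have h1 : 0 ≤ γ ^ 2 * v * z t / (σ * x t) * (x t - σ / γ) ^ 2 := by
      positivity
    have h2 : 0 ≤ γ * f (y t) * (y t - v / σ * Real.log (y t) + m) * (z t) ^ 2 := by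
      have := hfnn (y t)
      positivity
    linarith
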